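/- Let (X,T) be a Floyd–Auslander system. For any α ∈ Σ there exists an idempotent f ∈ J(X) such that f(L_α) is a single point (α,z) for some z with (α,z) ∈ L_α. -/

import Mathlib

open Filter Topology

noncomputable section

def lam0 : ℝ → ℝ := fun x => x / 2
def lam1 : ℝ → ℝ := fun x => x
def lam2 : ℝ → ℝ := fun x => x / 2 + 1 / 2

/-- The defining data of a Floyd–Auslander construction: a sequence `p` of
integers `≥ 2` and, for each `n` and `j ∈ [p n]`, a map `lam n j` which is one
of `lam0, lam1, lam2`. -/
structure FAData where
  p : ℕ → ℕ
  hp : ∀ n, 2 ≤ p n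
  lam : (n : ℕ) → Fin (p n) → ℝ → ℝ
  hlam : ∀ n j, lam n j = lam0 ∨ lam n j = lam1 ∨ lam n j = lam2

namespace FAData

variable (D : FAData)

abbrev Sigma : Type := ∀ n, Fin (D.p n)

def fin0 (n : ℕ) : Fin (D.p n) := ⟨0, by have := D.hp n; omega⟩

def finTop (n : ℕ) : Fin (D.p n) := ⟨D.p n - 1, by have := D.hp n; omega⟩

/-- Addition mod `p n`, as an element of `Fin (p n)`. -/
def modAdd (n : ℕ) (a b : ℕ) : Fin (D.p n) :=
  ⟨(a + b) % D.p n, Nat.mod_lt _ (by have := D.hp n; omega)⟩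

def Q (n : ℕ) : Set (Fin (D.p n)) := {j | D.lam n j = lam1}
def H0 (n : ℕ) : Set (Fin (D.p n)) := {j | D.lam n j = lam0}
def H2 (n : ℕ) : Set (Fin (D.p n)) := {j | D.lam n j = lam2}

/-- The carry entering position `n` when adding `1̲ = 10^∞` to `α`. -/
def carryIn (α : D.Sigma) : ℕ → ℕ
  | 0 => 1
  | n + 1 => if D.p n ≤ (α n).val + carryIn α n then 1 else 0

/-- The odometer add-one map `α ↦ α + 1̲`. -/
def addOne (α : D.Sigma) : D.Sigma := fun n => D.modAdd n (α n).val (D.carryIn α n)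

/-- `lamComp α n = λ¹_{α₁} ∘ … ∘ λⁿ_{α_n}` (with `lamComp α 0 = id`). -/
def lamComp (α : D.Sigma) : ℕ → ℝ → ℝ
  | 0 => id
  | n + 1 => lamComp α n ∘ D.lam n (α n)

/-- The space `X ⊆ Σ × ℝ` of the Floyd–Auslander construction. -/
def X : Set (D.Sigma × ℝ) :=
  {q | ∃ z ∈ Set.Icc (0 : ℝ) 1, Tendsto (fun n => D.lamComp q.1 n z) atTop (𝓝 q.2)}

/-- The fibre `L_α = ({α} × [0,1]) ∩ X`. -/
def Lfib (α : D.Sigma) : Set (D.Sigma × ℝ) := {q ∈ D.X | q.1 = α}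

/-- A fibre `L_α` is maximal if the length (diameter) of `π₂(L_α)` is maximal. -/
def IsMaximalFiber (α : D.Sigma) : Prop :=
  ∀ β : D.Sigma, Metric.diam (Prod.snd '' D.Lfib β) ≤ Metric.diam (Prod.snd '' D.Lfib α)

/-- A convenient subset `𝒜 ⊆ Σ`. -/
def Convenient (𝒜 : Set D.Sigma) : Prop :=
  ¬𝒜.Countable ∧ (∀ α ∈ 𝒜, D.IsMaximalFiber α) ∧
    ∃ q k k' : ℕ → ℕ, StrictMono q ∧ StrictMono k ∧ StrictMono k' ∧
      (∀ ℓ, ∃ ξ1 ξ2 : Fin (D.p (q ℓ)), ξ1 ∈ D.Q (q ℓ) ∧ ξ2 ∈ D.Q (q ℓ) ∧ ξ1 < ξ2 ∧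
        ∀ α ∈ 𝒜, α (q ℓ) = ξ1) ∧
      (∀ ℓ, (D.H2 (k ℓ)).Nonempty ∧ ∃ ζ ∈ D.Q (k ℓ), ∀ α ∈ 𝒜, α (k ℓ) = ζ) ∧
      (∀ ℓ, (D.H0 (k' ℓ)).Nonempty ∧ ∃ ζ ∈ D.Q (k' ℓ), ∀ α ∈ 𝒜, α (k' ℓ) = ζ)

/-- Condition (A). -/
def CondA : Prop :=
  ∃ ns : ℕ → ℕ, StrictMono ns ∧ ∀ ℓ, 2 ≤ (D.Q (ns ℓ)).ncard ∧
    ∃ a0 a1 : Fin (D.p (ns ℓ)), a0 ∈ D.Q (ns ℓ) ∧ a1 ∈ D.Q (ns ℓ) ∧ a0 ≠ a1 ∧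
      ∃ Δ : Fin (D.p (ns ℓ)),
        D.modAdd (ns ℓ) a0.val Δ.val ∈ D.H0 (ns ℓ) ∧
        D.modAdd (ns ℓ) a1.val Δ.val ∈ D.H2 (ns ℓ)

/-- Condition (B). -/
def CondB : Prop :=
  ∃ ns : ℕ → ℕ, StrictMono ns ∧ ∀ ℓ, 2 ≤ (D.Q (ns ℓ)).ncard ∧
    ∀ a0 a1 : Fin (D.p (ns ℓ)), a0 ∈ D.Q (ns ℓ) → a1 ∈ D.Q (ns ℓ) → a0 ≠ a1 →
      ∀ j : Fin (D.p (ns ℓ)),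
        (D.modAdd (ns ℓ) a0.val j.val ∈ D.H0 (ns ℓ) ↔
          D.modAdd (ns ℓ) a1.val j.val ∈ D.H0 (ns ℓ)) ∧
        (D.modAdd (ns ℓ) a0.val j.val ∈ D.H2 (ns ℓ) ↔
          D.modAdd (ns ℓ) a1.val j.val ∈ D.H2 (ns ℓ))

/-- Condition (C). -/
def CondC : Prop :=
  ∃ ns : ℕ → ℕ, StrictMono ns ∧ ∀ ℓ, 2 ≤ (D.Q (ns ℓ)).ncard ∧
    ∃ a0 a1 : Fin (D.p (ns ℓ)), a0 ∈ D.Q (ns ℓ) ∧ a1 ∈ D.Q (ns ℓ) ∧ a0 ≠ a1 ∧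
      ∃ Δ : Fin (D.p (ns ℓ)), ∃ h : a0.val + Δ.val < D.p (ns ℓ),
        (⟨a0.val + Δ.val, h⟩ : Fin (D.p (ns ℓ))) ∈ D.Q (ns ℓ) ∧
        D.modAdd (ns ℓ) a1.val Δ.val ∈ D.H0 (ns ℓ) ∪ D.H2 (ns ℓ)

end FAData

/-- A Floyd–Auslander system: the data of the construction together with the
skew-product map `T`, the continuity conditions (i) and the condition (ii) that
`Q n = ∅` for at most finitely many `n`. -/
structure FASystem extends FAData where
  T : toFAData.X → toFAData.X
  hT : ∀ (α : toFAData.Sigma) (z y y' : ℝ), z ∈ Set.Icc (0 : ℝ) 1 →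
    Tendsto (fun n => toFAData.lamComp α n z) atTop (𝓝 y) →
    Tendsto (fun n => toFAData.lamComp (toFAData.addOne α) n z) atTop (𝓝 y') →
    ∀ hq : (α, y) ∈ toFAData.X,
      (T ⟨(α, y), hq⟩ : toFAData.Sigma × ℝ) = (toFAData.addOne α, y')
  infLeft : {n : ℕ | toFAData.lam n (toFAData.fin0 n) = lam0 ∨
      toFAData.lam n (toFAData.fin0 n) = lam2}.Infinite
  infRight : {n : ℕ | toFAData.lam n (toFAData.finTop n) = lam0 ∨
      toFAData.lam n (toFAData.finTop n) = lam2}.Infinite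
  Qfin : {n : ℕ | toFAData.Q n = ∅}.Finite

namespace FASystem

variable (S : FASystem)

/-- The (forward) Ellis semigroup `E(X)`: the closure of `{Tⁿ : n ≥ 1}` in `X^X`. -/
def Ellis : Set (S.toFAData.X → S.toFAData.X) :=
  closure (Set.range fun n : ℕ => S.T^[n + 1])

/-- The set of idempotents `J(X)` of the Ellis semigroup. -/
def J : Set (S.toFAData.X → S.toFAData.X) := {f | f ∈ S.Ellis ∧ f ∘ f = f}

/-- The set of minimal idempotents `J^min(X)` (minimal for `e ≤ f ↔ e = e ∘ f`). -/
def Jmin : Set (S.toFAData.X → S.toFAData.X) :=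
  {f | f ∈ S.J ∧ ∀ e ∈ S.J, e = e ∘ f → e = f}

/-- `(X,T)` is minimal: every forward orbit is dense. -/
def Minimal : Prop := ∀ x : S.toFAData.X, Dense (Set.range fun n : ℕ => S.T^[n] x)

/-- Property (∗). -/
def PropertyStar : Prop :=
  ∃ a ∈ Set.Ioo (0 : ℝ) 1, ∃ 𝒜 : Set S.toFAData.Sigma, S.toFAData.Convenient 𝒜 ∧
    ((∀ B ⊆ 𝒜, ∃ f ∈ S.J, ∃ B1 B2 : Set S.toFAData.Sigma, B1 ∪ B2 = B ∧ Disjoint B1 B2 ∧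
        (∀ α ∈ 𝒜 \ B, ∃ b ∈ Set.Icc (0 : ℝ) a, ∀ q : S.toFAData.X,
          (q : S.toFAData.Sigma × ℝ).1 = α → (f q : S.toFAData.Sigma × ℝ) = (α, b)) ∧
        (∀ α ∈ B1, ∃ c : ℝ, a < c ∧ ∀ q : S.toFAData.X,
          (q : S.toFAData.Sigma × ℝ).1 = α → (f q : S.toFAData.Sigma × ℝ) = (α, c)) ∧
        (∀ α ∈ B2, ∀ q : S.toFAData.X, (q : S.toFAData.Sigma × ℝ).1 = α → f q = q)) ∨
     (∀ B ⊆ 𝒜, ∃ f ∈ S.J, ∃ B1 B2 : Set S.toFAData.Sigma, B1 ∪ B2 = B ∧ Disjoint B1 B2 ∧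
        (∀ α ∈ 𝒜 \ B, ∃ b ∈ Set.Icc a (1 : ℝ), ∀ q : S.toFAData.X,
          (q : S.toFAData.Sigma × ℝ).1 = α → (f q : S.toFAData.Sigma × ℝ) = (α, b)) ∧
        (∀ α ∈ B1, ∃ c : ℝ, c < a ∧ ∀ q : S.toFAData.X,
          (q : S.toFAData.Sigma × ℝ).1 = α → (f q : S.toFAData.Sigma × ℝ) = (α, c)) ∧
        (∀ α ∈ B2, ∀ q : S.toFAData.X, (q : S.toFAData.Sigma × ℝ).1 = α → f q = q)))

end FASystem

section Aux
open Classical Finset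

namespace FAData

variable (D : FAData)

lemma lam0_ne_lam1 : lam0 ≠ lam1 := by
  intro h; have := congrFun h 1; norm_num [lam0, lam1] at this

lemma lam2_ne_lam1 : lam2 ≠ lam1 := by
  intro h; have := congrFun h 0; norm_num [lam0, lam1, lam2] at this

/-- The slope of `lam n j`. -/
noncomputable def fac (n : ℕ) (j : Fin (D.p n)) : ℝ :=
  if D.lam n j = lam1 then 1 else 1/2

lemma lam_eval (n : ℕ) (j : Fin (D.p n)) (x : ℝ) :
    D.lam n j x = D.fac n j * x + D.lam n j 0 := by
  rcases D.hlam n j with h | h | h <;>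
    simp [h, fac, lam0, lam1, lam2, lam0_ne_lam1, lam2_ne_lam1] <;> try ring

lemma fac_pos (n : ℕ) (j : Fin (D.p n)) : 0 < D.fac n j := by
  unfold fac; split <;> norm_num

lemma fac_le_one (n : ℕ) (j : Fin (D.p n)) : D.fac n j ≤ 1 := by
  unfold fac; split <;> norm_num

lemma lam_zero_nonneg (n : ℕ) (j : Fin (D.p n)) : 0 ≤ D.lam n j 0 := by
  rcases D.hlam n j with h | h | h <;> simp [h, lam0, lam1, lam2] <;> norm_num

lemma lam_zero_add_fac_le_one (n : ℕ) (j : Fin (D.p n)) :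
    D.lam n j 0 + D.fac n j ≤ 1 := by
  rcases D.hlam n j with h | h | h <;>
    simp [h, fac, lam0, lam1, lam2, lam0_ne_lam1, lam2_ne_lam1] <;> norm_num

/-- The cumulative slope of `lamComp γ n`. -/
noncomputable def cc (γ : D.Sigma) : ℕ → ℝ
  | 0 => 1
  | n + 1 => cc γ n * D.fac n (γ n)

/-- The intercept of `lamComp γ n`. -/
noncomputable def uu (γ : D.Sigma) (n : ℕ) : ℝ := D.lamComp γ n 0

lemma cc_succ_eq (γ : D.Sigma) (n : ℕ) :
    D.cc γ (n+1) = D.cc γ n * D.fac n (γ n) := by simp [cc]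

lemma cc_pos (γ : D.Sigma) (n : ℕ) : 0 < D.cc γ n := by
  induction n with
  | zero => norm_num [cc]
  | succ n ih => exact mul_pos ih (D.fac_pos _ _)

lemma cc_succ_le (γ : D.Sigma) (n : ℕ) : D.cc γ (n+1) ≤ D.cc γ n := by
  have := D.cc_pos γ n
  calc D.cc γ (n+1) = D.cc γ n * D.fac n (γ n) := D.cc_succ_eq γ n
    _ ≤ D.cc γ n * 1 := by nlinarith [D.fac_le_one n (γ n)]
    _ = D.cc γ n := by ring

lemma cc_antitone (γ : D.Sigma) : Antitone (D.cc γ) :=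
  antitone_nat_of_succ_le (D.cc_succ_le γ)

lemma cc_le_one (γ : D.Sigma) (n : ℕ) : D.cc γ n ≤ 1 := by
  have := D.cc_antitone γ (Nat.zero_le n); simpa [cc] using this

lemma lamComp_affine (γ : D.Sigma) (n : ℕ) (x : ℝ) :
    D.lamComp γ n x = D.uu γ n + D.cc γ n * x := by
  induction n generalizing x with
  | zero => simp [lamComp, uu, cc]
  | succ n ih =>
    have h1 : D.lamComp γ (n+1) x = D.lamComp γ n (D.lam n (γ n) x) := rfl
    have h0 : D.uu γ (n+1) = D.uu γ n + D.cc γ n * D.lam n (γ n) 0 := by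
      have h2 : D.uu γ (n+1) = D.lamComp γ n (D.lam n (γ n) 0) := rfl
      rw [h2, ih]
    rw [h1, ih, D.lam_eval n (γ n), h0, D.cc_succ_eq]
    ring

lemma uu_succ (γ : D.Sigma) (n : ℕ) :
    D.uu γ (n+1) = D.uu γ n + D.cc γ n * D.lam n (γ n) 0 := by
  have h2 : D.uu γ (n+1) = D.lamComp γ n (D.lam n (γ n) 0) := rfl
  rw [h2, D.lamComp_affine]

lemma uu_succ_ge (γ : D.Sigma) (n : ℕ) : D.uu γ n ≤ D.uu γ (n+1) := by
  rw [uu_succ]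
  nlinarith [D.cc_pos γ n, D.lam_zero_nonneg n (γ n)]

lemma uu_monotone (γ : D.Sigma) : Monotone (D.uu γ) :=
  monotone_nat_of_le_succ (D.uu_succ_ge γ)

lemma vv_succ_le (γ : D.Sigma) (n : ℕ) :
    D.uu γ (n+1) + D.cc γ (n+1) ≤ D.uu γ n + D.cc γ n := by
  rw [uu_succ]
  rw [D.cc_succ_eq]
  nlinarith [D.cc_pos γ n, D.lam_zero_add_fac_le_one n (γ n)]

lemma vv_antitone (γ : D.Sigma) : Antitone (fun n => D.uu γ n + D.cc γ n) :=
  antitone_nat_of_succ_le (D.vv_succ_le γ)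

lemma uu_zero (γ : D.Sigma) : D.uu γ 0 = 0 := rfl

lemma uu_nonneg (γ : D.Sigma) (n : ℕ) : 0 ≤ D.uu γ n := by
  have := D.uu_monotone γ (Nat.zero_le n); simpa [uu_zero] using this

lemma uu_le_vv (γ : D.Sigma) {n m : ℕ} : D.uu γ n ≤ D.uu γ m + D.cc γ m := by
  rcases le_total n m with h | h
  · exact le_trans (D.uu_monotone γ h) (le_add_of_nonneg_right (D.cc_pos γ m).le)
  · exact le_trans (le_add_of_nonneg_right (D.cc_pos γ n).le) (D.vv_antitone γ h)

lemma vv_le_one (γ : D.Sigma) (n : ℕ) : D.uu γ n + D.cc γ n ≤ 1 := by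
  have := D.vv_antitone γ (Nat.zero_le n)
  simpa [uu_zero, cc] using this

lemma uu_bddAbove (γ : D.Sigma) : BddAbove (Set.range (D.uu γ)) := by
  refine ⟨1, ?_⟩; rintro x ⟨n, rfl⟩
  have := D.vv_le_one γ n; have := (D.cc_pos γ n).le; linarith

lemma cc_bddBelow (γ : D.Sigma) : BddBelow (Set.range (D.cc γ)) := by
  refine ⟨0, ?_⟩; rintro x ⟨n, rfl⟩; exact (D.cc_pos γ n).le

/-- Limits. -/
noncomputable def uL (γ : D.Sigma) : ℝ := ⨆ n, D.uu γ n
noncomputable def cL (γ : D.Sigma) : ℝ := ⨅ n, D.cc γ n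

lemma tendsto_uu (γ : D.Sigma) : Tendsto (D.uu γ) atTop (𝓝 (D.uL γ)) :=
  tendsto_atTop_ciSup (D.uu_monotone γ) (D.uu_bddAbove γ)

lemma tendsto_cc (γ : D.Sigma) : Tendsto (D.cc γ) atTop (𝓝 (D.cL γ)) :=
  tendsto_atTop_ciInf (D.cc_antitone γ) (D.cc_bddBelow γ)

/-- The limit map of the fibre over `γ`. -/
noncomputable def Phi (γ : D.Sigma) (z : ℝ) : ℝ := D.uL γ + D.cL γ * z

lemma tendsto_lamComp (γ : D.Sigma) (z : ℝ) :
    Tendsto (fun n => D.lamComp γ n z) atTop (𝓝 (D.Phi γ z)) := by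
  have h : (fun n => D.lamComp γ n z) = fun n => D.uu γ n + D.cc γ n * z := by
    funext n; exact D.lamComp_affine γ n z
  rw [h]
  exact (D.tendsto_uu γ).add ((D.tendsto_cc γ).mul_const z)

lemma uu_le_uL (γ : D.Sigma) (n : ℕ) : D.uu γ n ≤ D.uL γ :=
  le_ciSup (D.uu_bddAbove γ) n

lemma cL_le_cc (γ : D.Sigma) (n : ℕ) : D.cL γ ≤ D.cc γ n :=
  ciInf_le (D.cc_bddBelow γ) n

lemma cL_nonneg (γ : D.Sigma) : 0 ≤ D.cL γ :=
  le_ciInf fun n => (D.cc_pos γ n).le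

lemma uL_add_cL_le (γ : D.Sigma) (n : ℕ) : D.uL γ + D.cL γ ≤ D.uu γ n + D.cc γ n := by
  have h : Tendsto (fun n => D.uu γ n + D.cc γ n) atTop (𝓝 (D.uL γ + D.cL γ)) :=
    (D.tendsto_uu γ).add (D.tendsto_cc γ)
  have := (D.vv_antitone γ).le_of_tendsto h n
  exact this

lemma uL_nonneg (γ : D.Sigma) : 0 ≤ D.uL γ :=
  le_trans (D.uu_nonneg γ 0) (D.uu_le_uL γ 0)

lemma Phi_mem_Icc (γ : D.Sigma) {z : ℝ} (hz : z ∈ Set.Icc (0:ℝ) 1) (n : ℕ) :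
    D.Phi γ z ∈ Set.Icc (D.uu γ n) (D.uu γ n + D.cc γ n) := by
  obtain ⟨hz0, hz1⟩ := hz
  constructor
  · have := D.uu_le_uL γ n
    have := D.cL_nonneg γ
    unfold Phi; nlinarith
  · have h1 := D.uL_add_cL_le γ n
    have := D.cL_nonneg γ
    unfold Phi; nlinarith

/-- Membership in `X` in terms of `Phi`. -/
lemma mem_X_iff (γ : D.Sigma) (y : ℝ) :
    (γ, y) ∈ D.X ↔ D.uL γ ≤ y ∧ y ≤ D.uL γ + D.cL γ := by
  constructor
  · rintro ⟨z, hz, hten⟩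
    have := tendsto_nhds_unique hten (D.tendsto_lamComp γ z)
    subst this
    obtain ⟨hz0, hz1⟩ := hz
    have := D.cL_nonneg γ
    constructor <;> [skip; skip] <;> unfold Phi <;> nlinarith
  · rintro ⟨h1, h2⟩
    by_cases hc : D.cL γ = 0
    · refine ⟨0, by norm_num, ?_⟩
      have h := D.tendsto_lamComp γ 0
      have he : D.Phi γ 0 = y := by unfold Phi; rw [hc]; linarith
      rwa [he] at h
    · have hcpos : 0 < D.cL γ := lt_of_le_of_ne (D.cL_nonneg γ) (Ne.symm hc)
      refine ⟨(y - D.uL γ) / D.cL γ, ⟨div_nonneg (by linarith) hcpos.le, ?_⟩, ?_⟩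
      · rw [div_le_one hcpos]; linarith
      · have h := D.tendsto_lamComp γ ((y - D.uL γ) / D.cL γ)
        have he : D.Phi γ ((y - D.uL γ) / D.cL γ) = y := by
          unfold Phi; field_simp; ring
        rwa [he] at h

lemma Phi_mem_X (γ : D.Sigma) {z : ℝ} (hz : z ∈ Set.Icc (0:ℝ) 1) :
    (γ, D.Phi γ z) ∈ D.X := ⟨z, hz, D.tendsto_lamComp γ z⟩

lemma exists_z_of_mem_X {γ : D.Sigma} {y : ℝ} (h : (γ, y) ∈ D.X) :
    ∃ z ∈ Set.Icc (0:ℝ) 1, D.Phi γ z = y := by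
  obtain ⟨z, hz, hten⟩ := h
  exact ⟨z, hz, (tendsto_nhds_unique (D.tendsto_lamComp γ z) hten)⟩

end FAData
end Aux
section Aux2
namespace FAData

variable (D : FAData)

/-! ### Congruence lemmas -/

lemma lamComp_congr {γ γ' : D.Sigma} {n : ℕ} (h : ∀ i < n, γ' i = γ i) :
    D.lamComp γ' n = D.lamComp γ n := by
  induction n with
  | zero => rfl
  | succ n ih =>
    have h1 : D.lamComp γ' (n+1) = D.lamComp γ' n ∘ D.lam n (γ' n) := rfl
    have h2 : D.lamComp γ (n+1) = D.lamComp γ n ∘ D.lam n (γ n) := rfl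
    rw [h1, h2, ih (fun i hi => h i (Nat.lt_succ_of_lt hi)), h n (Nat.lt_succ_self n)]

lemma uu_congr {γ γ' : D.Sigma} {n : ℕ} (h : ∀ i < n, γ' i = γ i) :
    D.uu γ' n = D.uu γ n := by
  unfold uu; rw [D.lamComp_congr h]

lemma cc_congr {γ γ' : D.Sigma} {n : ℕ} (h : ∀ i < n, γ' i = γ i) :
    D.cc γ' n = D.cc γ n := by
  induction n with
  | zero => rfl
  | succ n ih =>
    rw [D.cc_succ_eq, D.cc_succ_eq, ih (fun i hi => h i (Nat.lt_succ_of_lt hi)),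
      h n (Nat.lt_succ_self n)]

/-! ### Topology of `Sigma` -/

lemma isOpen_cyl (γ : D.Sigma) (n : ℕ) : IsOpen {γ' : D.Sigma | ∀ i < n, γ' i = γ i} := by
  have : {γ' : D.Sigma | ∀ i < n, γ' i = γ i} =
      ⋂ i ∈ Finset.range n, (fun γ' : D.Sigma => γ' i) ⁻¹' {γ i} := by
    ext γ'; simp [Set.mem_iInter]
  rw [this]
  exact isOpen_biInter_finset fun i _ =>
    (continuous_apply i).isOpen_preimage _ (isOpen_discrete _)

lemma continuous_of_locally_determined {Y : Type*} [TopologicalSpace Y] {f : D.Sigma → Y}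
    (h : ∀ γ : D.Sigma, ∃ n, ∀ γ' : D.Sigma, (∀ i < n, γ' i = γ i) → f γ' = f γ) :
    Continuous f := by
  rw [continuous_iff_continuousAt]
  intro γ
  obtain ⟨n, hn⟩ := h γ
  have hev : f =ᶠ[𝓝 γ] fun _ => f γ := by
    filter_upwards [(D.isOpen_cyl γ n).mem_nhds (fun i _ => rfl)] with γ' hγ'
    exact hn γ' hγ'
  exact (continuousAt_const (y := f γ)).congr hev.symm

lemma continuous_uu (n : ℕ) : Continuous (fun γ : D.Sigma => D.uu γ n) :=
  D.continuous_of_locally_determined fun γ => ⟨n, fun γ' h => D.uu_congr h⟩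

lemma continuous_cc (n : ℕ) : Continuous (fun γ : D.Sigma => D.cc γ n) :=
  D.continuous_of_locally_determined fun γ => ⟨n, fun γ' h => D.cc_congr h⟩

/-! ### `X` is compact -/

lemma X_eq_iInter : D.X = ⋂ n, {q : D.Sigma × ℝ |
    D.uu q.1 n ≤ q.2 ∧ q.2 ≤ D.uu q.1 n + D.cc q.1 n} := by
  ext ⟨γ, y⟩
  rw [Set.mem_iInter]
  constructor
  · intro h n
    rw [D.mem_X_iff] at h
    exact ⟨le_trans (D.uu_le_uL γ n) h.1,
      le_trans h.2 (D.uL_add_cL_le γ n)⟩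
  · intro h
    rw [D.mem_X_iff]
    constructor
    · exact ciSup_le fun n => (h n).1
    · have h1 : Tendsto (fun n => D.uu γ n + D.cc γ n) atTop (𝓝 (D.uL γ + D.cL γ)) :=
        (D.tendsto_uu γ).add (D.tendsto_cc γ)
      exact ge_of_tendsto h1 (Filter.Eventually.of_forall fun n => (h n).2)

lemma isClosed_X : IsClosed D.X := by
  rw [D.X_eq_iInter]
  refine isClosed_iInter fun n => ?_
  have c1 : Continuous (fun q : D.Sigma × ℝ => D.uu q.1 n) :=
    (D.continuous_uu n).comp continuous_fst
  have c2 : Continuous (fun q : D.Sigma × ℝ => D.cc q.1 n) :=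
    (D.continuous_cc n).comp continuous_fst
  exact IsClosed.inter (isClosed_le c1 continuous_snd)
    (isClosed_le continuous_snd (c1.add c2))

lemma isCompact_X : IsCompact D.X := by
  have hsub : D.X ⊆ Set.univ ×ˢ Set.Icc (0:ℝ) 1 := by
    rintro ⟨γ, y⟩ hq
    rw [D.mem_X_iff] at hq
    refine ⟨Set.mem_univ _, ?_, ?_⟩
    · exact le_trans (D.uL_nonneg γ) hq.1
    · exact le_trans hq.2 (le_trans (D.uL_add_cL_le γ 0) (D.vv_le_one γ 0))
  exact (isCompact_univ.prod isCompact_Icc).of_isClosed_subset D.isClosed_X hsub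

instance : CompactSpace D.X := isCompact_iff_compactSpace.mp D.isCompact_X

/-! ### Carry lemmas -/

lemma carryIn_le_one (γ : D.Sigma) (n : ℕ) : D.carryIn γ n ≤ 1 := by
  cases n with
  | zero => simp [carryIn]
  | succ n => unfold carryIn; split <;> norm_num

lemma carryIn_congr {γ γ' : D.Sigma} {n : ℕ} (h : ∀ i < n, γ' i = γ i) :
    D.carryIn γ' n = D.carryIn γ n := by
  induction n with
  | zero => rfl
  | succ n ih =>
    unfold carryIn
    rw [ih (fun i hi => h i (Nat.lt_succ_of_lt hi)), h n (Nat.lt_succ_self n)]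

lemma addOne_congr {γ γ' : D.Sigma} {n : ℕ} (h : ∀ i < n, γ' i = γ i) :
    ∀ i < n, D.addOne γ' i = D.addOne γ i := by
  intro i hi
  unfold addOne
  rw [h i hi, D.carryIn_congr (fun k hk => h k (lt_trans hk hi))]

lemma carryIn_zero_propagate {γ : D.Sigma} {N n : ℕ} (h : D.carryIn γ N = 0)
    (hn : N ≤ n) : D.carryIn γ n = 0 := by
  induction n with
  | zero =>
    have hN : N = 0 := by omega
    subst hN; exact h
  | succ n ih =>
    rcases Nat.lt_or_ge N (n+1) with h1 | h1
    · have hNn : N ≤ n := by omega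
      have := ih hNn
      unfold carryIn
      rw [this]
      have hlt := (γ n).isLt
      simp only [Nat.add_zero]
      exact if_neg (Nat.not_le.mpr hlt)
    · have : N = n + 1 := by omega
      rw [← this]; exact h
  
lemma addOne_eq_of_carry_zero {γ : D.Sigma} {N n : ℕ} (h : D.carryIn γ N = 0)
    (hn : N ≤ n) : D.addOne γ n = γ n := by
  unfold addOne modAdd
  rw [D.carryIn_zero_propagate h hn]
  exact Fin.ext (by simp [Nat.mod_eq_of_lt (γ n).isLt])

lemma all_top_of_carry_all_one {γ : D.Sigma} (h : ∀ n, D.carryIn γ n = 1) :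
    ∀ n, (γ n).val = D.p n - 1 := by
  intro n
  have h1 := h (n+1)
  have h2 := h n
  unfold carryIn at h1
  rw [h2] at h1
  have := (γ n).isLt
  by_contra hne
  have : (γ n).val + 1 < D.p n := by omega
  simp [Nat.not_le.mpr this] at h1

lemma addOne_of_all_top {γ : D.Sigma} (h : ∀ n, D.carryIn γ n = 1) :
    ∀ n, (D.addOne γ n).val = 0 := by
  intro n
  have := D.all_top_of_carry_all_one h n
  have hp := D.hp n
  show ((γ n).val + D.carryIn γ n) % D.p n = 0
  rw [h n, this, show D.p n - 1 + 1 = D.p n by omega, Nat.mod_self]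

lemma carryIn_cases (γ : D.Sigma) : (∃ N, D.carryIn γ N = 0) ∨ ∀ n, D.carryIn γ n = 1 := by
  by_cases h : ∀ n, D.carryIn γ n = 1
  · exact Or.inr h
  · push_neg at h
    obtain ⟨N, hN⟩ := h
    have := D.carryIn_le_one γ N
    exact Or.inl ⟨N, by omega⟩

lemma continuous_addOne : Continuous D.addOne := by
  refine continuous_pi fun n => ?_
  exact D.continuous_of_locally_determined fun γ =>
    ⟨n + 1, fun γ' h => D.addOne_congr (fun i hi => h i hi) n (Nat.lt_succ_self n)⟩

end FAData
end Aux2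
section Aux3
open Finset
namespace FAData

variable (D : FAData)

/-- Products of the first `m` periods. -/
def PP (m : ℕ) : ℕ := ∏ i ∈ Finset.range m, D.p i

lemma PP_pos (m : ℕ) : 0 < D.PP m :=
  Finset.prod_pos fun i _ => by have := D.hp i; omega

lemma PP_succ (m : ℕ) : D.PP (m+1) = D.PP m * D.p m := Finset.prod_range_succ _ _

lemma PP_dvd {r m : ℕ} (h : r ≤ m) : D.PP r ∣ D.PP m := by
  obtain ⟨k, rfl⟩ := Nat.exists_eq_add_of_le h
  unfold PP
  rw [Finset.prod_range_add]
  exact Dvd.intro _ rfl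

/-- The value of the first `m` digits. -/
def valN (γ : D.Sigma) (m : ℕ) : ℕ := ∑ r ∈ Finset.range m, (γ r).val * D.PP r

lemma valN_succ (γ : D.Sigma) (m : ℕ) :
    D.valN γ (m+1) = D.valN γ m + (γ m).val * D.PP m := Finset.sum_range_succ _ _

lemma valN_lt (γ : D.Sigma) (m : ℕ) : D.valN γ m < D.PP m := by
  induction m with
  | zero => simp [valN, PP]
  | succ m ih =>
    rw [D.valN_succ, D.PP_succ]
    have h1 : (γ m).val + 1 ≤ D.p m := (γ m).isLt
    have h2 : ((γ m).val + 1) * D.PP m ≤ D.p m * D.PP m := Nat.mul_le_mul_right _ h1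
    have h3 : ((γ m).val + 1) * D.PP m = (γ m).val * D.PP m + D.PP m := by ring
    have h4 : D.PP m * D.p m = D.p m * D.PP m := Nat.mul_comm _ _
    omega

lemma valN_congr {γ γ' : D.Sigma} {m : ℕ} (h : ∀ i < m, γ' i = γ i) :
    D.valN γ' m = D.valN γ m :=
  Finset.sum_congr rfl fun r hr => by rw [h r (Finset.mem_range.mp hr)]

/-- Digit extraction from the value. -/
lemma valN_decompose (γ : D.Sigma) {r m : ℕ} (h : r < m) :
    ∃ Q : ℕ, D.valN γ m = D.valN γ r + (γ r).val * D.PP r + Q * (D.PP r * D.p r) := by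
  induction m with
  | zero => omega
  | succ m ih =>
    rcases Nat.lt_or_ge r m with h1 | h1
    · obtain ⟨Q, hQ⟩ := ih h1
      obtain ⟨k, hk⟩ := D.PP_dvd (show r + 1 ≤ m from h1)
      refine ⟨Q + (γ m).val * k, ?_⟩
      rw [D.valN_succ, hQ]
      have : D.PP m = D.PP r * D.p r * k := by rw [D.PP_succ] at hk; exact hk
      rw [this]; ring
    · have : r = m := by omega
      subst this
      exact ⟨0, by rw [D.valN_succ]; ring⟩

lemma digit_eq_of_valN_eq {γ γ' : D.Sigma} {m : ℕ}
    (h : D.valN γ' m = D.valN γ m) : ∀ r < m, γ' r = γ r := by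
  -- strong induction on r
  intro r hr
  induction r using Nat.strong_induction_on with
  | _ r ih =>
    obtain ⟨Q1, hQ1⟩ := D.valN_decompose γ' (h := hr)
    obtain ⟨Q2, hQ2⟩ := D.valN_decompose γ (h := hr)
    have hvr : D.valN γ' r = D.valN γ r :=
      D.valN_congr (fun i hi => ih i hi (lt_trans hi hr))
    rw [hQ1, hQ2, hvr] at h
    have hP := D.PP_pos r
    have hlt1 := (γ' r).isLt
    have hlt2 := (γ r).isLt
    have key : (γ' r).val = (γ r).val := by
      have h2 : (γ' r).val * D.PP r + Q1 * (D.PP r * D.p r) =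
          (γ r).val * D.PP r + Q2 * (D.PP r * D.p r) := by omega
      have h3 : ((γ' r).val + Q1 * D.p r) * D.PP r = ((γ r).val + Q2 * D.p r) * D.PP r := by
        have e1 : ((γ' r).val + Q1 * D.p r) * D.PP r
            = (γ' r).val * D.PP r + Q1 * (D.PP r * D.p r) := by ring
        have e2 : ((γ r).val + Q2 * D.p r) * D.PP r
            = (γ r).val * D.PP r + Q2 * (D.PP r * D.p r) := by ring
        omega
      have h4 : (γ' r).val + Q1 * D.p r = (γ r).val + Q2 * D.p r :=
        Nat.eq_of_mul_eq_mul_right hP h3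
      have := Nat.add_mul_mod_self_right (γ' r).val Q1 (D.p r)
      have := Nat.add_mul_mod_self_right (γ r).val Q2 (D.p r)
      calc (γ' r).val = ((γ' r).val + Q1 * D.p r) % D.p r := by
            rw [Nat.add_mul_mod_self_right, Nat.mod_eq_of_lt hlt1]
        _ = ((γ r).val + Q2 * D.p r) % D.p r := by rw [h4]
        _ = (γ r).val := by rw [Nat.add_mul_mod_self_right, Nat.mod_eq_of_lt hlt2]
    exact Fin.ext key

/-- Value of `addOne`. -/
lemma valN_addOne_aux (γ : D.Sigma) (m : ℕ) :
    D.valN (D.addOne γ) m + D.carryIn γ m * D.PP m = D.valN γ m + 1 := by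
  induction m with
  | zero => simp [valN, PP, carryIn]
  | succ m ih =>
    rw [D.valN_succ, D.valN_succ, D.PP_succ]
    have hdig : (D.addOne γ m).val = ((γ m).val + D.carryIn γ m) % D.p m := rfl
    have hcar : D.carryIn γ (m+1) = if D.p m ≤ (γ m).val + D.carryIn γ m then 1 else 0 := rfl
    have hc1 := D.carryIn_le_one γ m
    have hlt := (γ m).isLt
    by_cases hcase : D.p m ≤ (γ m).val + D.carryIn γ m
    · have hm : ((γ m).val + D.carryIn γ m) % D.p m = (γ m).val + D.carryIn γ m - D.p m := by
        rw [Nat.mod_eq_sub_mod hcase, Nat.mod_eq_of_lt (by omega)]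
      rw [hcar, if_pos hcase, hdig, hm]
      have hsub : ((γ m).val + D.carryIn γ m - D.p m) * D.PP m + 1 * (D.PP m * D.p m)
          = ((γ m).val + D.carryIn γ m) * D.PP m := by
        have h5 : (γ m).val + D.carryIn γ m - D.p m + D.p m = (γ m).val + D.carryIn γ m := by
          omega
        calc ((γ m).val + D.carryIn γ m - D.p m) * D.PP m + 1 * (D.PP m * D.p m)
            = ((γ m).val + D.carryIn γ m - D.p m + D.p m) * D.PP m := by ring
          _ = _ := by rw [h5]
      have expand : ((γ m).val + D.carryIn γ m) * D.PP m
          = (γ m).val * D.PP m + D.carryIn γ m * D.PP m := by ring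
      omega
    · have hm : ((γ m).val + D.carryIn γ m) % D.p m = (γ m).val + D.carryIn γ m :=
        Nat.mod_eq_of_lt (by omega)
      rw [hcar, if_neg hcase, hdig, hm]
      have expand : ((γ m).val + D.carryIn γ m) * D.PP m
          = (γ m).val * D.PP m + D.carryIn γ m * D.PP m := by ring
      omega

lemma valN_addOne (γ : D.Sigma) (m : ℕ) :
    D.valN (D.addOne γ) m = (D.valN γ m + 1) % D.PP m := by
  have h := D.valN_addOne_aux γ m
  have hc := D.carryIn_le_one γ m
  have h1 := D.valN_lt γ m
  have h2 := D.valN_lt (D.addOne γ) m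
  have hP := D.PP_pos m
  rcases Nat.le_one_iff_eq_zero_or_eq_one.mp hc with hc0 | hc1
  · rw [hc0] at h
    simp at h
    rw [h] at h2 ⊢
    rw [Nat.mod_eq_of_lt h2]
  · rw [hc1] at h
    simp at h
    have : D.valN γ m + 1 = D.valN (D.addOne γ) m + D.PP m := by omega
    rw [this, Nat.add_mod_right, Nat.mod_eq_of_lt h2]

lemma valN_iterate (γ : D.Sigma) (m k : ℕ) :
    D.valN (D.addOne^[k] γ) m = (D.valN γ m + k) % D.PP m := by
  induction k with
  | zero => simp [Nat.mod_eq_of_lt (D.valN_lt γ m)]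
  | succ k ih =>
    rw [Function.iterate_succ_apply', D.valN_addOne, ih, Nat.mod_add_mod,
      show D.valN γ m + k + 1 = D.valN γ m + (k+1) by ring]

/-- Key lemma: iterating `addOne` to reach any prescribed digit pattern. -/
lemma exists_iterate_digits (γ target : D.Sigma) (m m' : ℕ) (hm : m' ≤ m)
    (hagree : ∀ r < m', target r = γ r) :
    ∃ k, 1 ≤ k ∧ (∀ r < m, (D.addOne^[k] γ) r = target r) ∧
      ∀ β : D.Sigma, ∀ r < m', (D.addOne^[k] β) r = β r := by
  have hP := D.PP_pos m
  have hval := D.valN_lt γ m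
  have hvalt := D.valN_lt target m
  set k := D.valN target m + (D.PP m - D.valN γ m) with hk
  have hdig : ∀ r < m, (D.addOne^[k] γ) r = target r := by
    apply D.digit_eq_of_valN_eq
    rw [D.valN_iterate]
    have h6 : D.valN γ m + k = D.valN target m + D.PP m := by omega
    rw [h6, Nat.add_mod_right, Nat.mod_eq_of_lt hvalt]
  refine ⟨k, by omega, hdig, ?_⟩
  -- k is divisible by PP m'
  have hP' := D.PP_pos m'
  have hkmod : k % D.PP m' = 0 := by
    have h1 : D.valN (D.addOne^[k] γ) m' = D.valN γ m' := by
      apply D.valN_congr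
      intro i hi
      rw [hdig i (lt_of_lt_of_le hi hm), hagree i hi]
    rw [D.valN_iterate] at h1
    have h2 : D.valN γ m' < D.PP m' := D.valN_lt γ m'
    have h3 : (D.valN γ m' + k) % D.PP m' = (D.valN γ m' + 0) % D.PP m' := by
      rw [h1, Nat.add_zero, Nat.mod_eq_of_lt h2]
    have h4 : k ≡ 0 [MOD D.PP m'] := Nat.ModEq.add_left_cancel' _ h3
    simpa [Nat.ModEq] using h4
  intro β r hr
  apply D.digit_eq_of_valN_eq (m := m')
  · rw [D.valN_iterate, Nat.add_mod, hkmod, Nat.add_zero, Nat.mod_mod_of_dvd _ (dvd_refl _),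
      Nat.mod_eq_of_lt (D.valN_lt β m')]
  · exact hr

end FAData
end Aux3
section Aux4
namespace FAData

variable (D : FAData)

/-! ### Products of slopes -/

lemma cc_eq_prod (γ : D.Sigma) (n : ℕ) :
    D.cc γ n = ∏ r ∈ Finset.range n, D.fac r (γ r) := by
  induction n with
  | zero => simp [cc]
  | succ n ih => rw [D.cc_succ_eq, ih, Finset.prod_range_succ]

lemma cc_le_pow_of_subset (γ : D.Sigma) {n : ℕ} {s : Finset ℕ}
    (hs : ∀ r ∈ s, r < n ∧ D.fac r (γ r) = 1/2) :
    D.cc γ n ≤ (1/2) ^ s.card := by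
  have hsub : s ⊆ Finset.range n := fun r hr => Finset.mem_range.mpr (hs r hr).1
  rw [D.cc_eq_prod]
  rw [← Finset.prod_sdiff hsub]
  have h1 : ∏ r ∈ Finset.range n \ s, D.fac r (γ r) ≤ 1 :=
    Finset.prod_le_one (fun r _ => (D.fac_pos r (γ r)).le) (fun r _ => D.fac_le_one r (γ r))
  have h2 : ∏ r ∈ s, D.fac r (γ r) = (1/2) ^ s.card := by
    rw [Finset.prod_congr rfl (fun r hr => (hs r hr).2), Finset.prod_const]
  rw [h2]
  have h3 : (0:ℝ) ≤ (1/2) ^ s.card := by positivity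
  nlinarith [Finset.prod_nonneg (fun r (_ : r ∈ Finset.range n \ s) => (D.fac_pos r (γ r)).le)]

lemma fac_eq_half_of_contr {n : ℕ} {j : Fin (D.p n)}
    (h : D.lam n j = lam0 ∨ D.lam n j = lam2) : D.fac n j = 1/2 := by
  unfold fac
  rcases h with h | h <;> rw [h] <;>
    simp [lam0_ne_lam1, lam2_ne_lam1]

lemma cL_eq_zero_of_infinite {γ : D.Sigma}
    (h : {n : ℕ | D.fac n (γ n) = 1/2}.Infinite) : D.cL γ = 0 := by
  refine le_antisymm ?_ (D.cL_nonneg γ)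
  have key : ∀ j : ℕ, ∃ N, D.cc γ N ≤ (1/2) ^ j := by
    intro j
    induction j with
    | zero => exact ⟨0, by norm_num [cc]⟩
    | succ j ih =>
      obtain ⟨N, hN⟩ := ih
      obtain ⟨n, hn, hNn⟩ := h.exists_gt N
      refine ⟨n + 1, ?_⟩
      have h1 : D.cc γ (n+1) = D.cc γ n * (1/2) := by
        rw [D.cc_succ_eq, hn]
      have h2 : D.cc γ n ≤ D.cc γ N := D.cc_antitone γ (le_of_lt hNn)
      rw [h1, pow_succ]
      nlinarith [D.cc_pos γ n]
  have h2 : ∀ j : ℕ, D.cL γ ≤ (1/2) ^ j := by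
    intro j; obtain ⟨N, hN⟩ := key j
    exact le_trans (D.cL_le_cc γ N) hN
  have h3 : Tendsto (fun j : ℕ => (1/2 : ℝ) ^ j) atTop (𝓝 0) :=
    tendsto_pow_atTop_nhds_zero_of_lt_one (by norm_num) (by norm_num)
  exact ge_of_tendsto h3 (Filter.Eventually.of_forall h2)

/-! ### Tail decomposition -/

/-- Cumulative slope of the composition `λ^N ∘ ... ∘ λ^{N+k-1}`. -/
noncomputable def CCt (γ : D.Sigma) (N k : ℕ) : ℝ :=
  ∏ r ∈ Finset.range k, D.fac (N+r) (γ (N+r))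

/-- Intercept of the composition `λ^N ∘ ... ∘ λ^{N+k-1}`. -/
noncomputable def UUt (γ : D.Sigma) (N k : ℕ) : ℝ :=
  ∑ r ∈ Finset.range k, D.CCt γ N r * D.lam (N+r) (γ (N+r)) 0

lemma CCt_succ (γ : D.Sigma) (N k : ℕ) :
    D.CCt γ N (k+1) = D.CCt γ N k * D.fac (N+k) (γ (N+k)) := Finset.prod_range_succ _ _

lemma UUt_succ (γ : D.Sigma) (N k : ℕ) :
    D.UUt γ N (k+1) = D.UUt γ N k + D.CCt γ N k * D.lam (N+k) (γ (N+k)) 0 :=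
  Finset.sum_range_succ _ _

lemma cc_split (γ : D.Sigma) (N k : ℕ) :
    D.cc γ (N + k) = D.cc γ N * D.CCt γ N k := by
  induction k with
  | zero => simp [CCt]
  | succ k ih =>
    rw [show N + (k+1) = (N+k) + 1 by ring, D.cc_succ_eq, ih, D.CCt_succ]
    ring

lemma uu_split (γ : D.Sigma) (N k : ℕ) :
    D.uu γ (N + k) = D.uu γ N + D.cc γ N * D.UUt γ N k := by
  induction k with
  | zero => simp [UUt]
  | succ k ih =>
    rw [show N + (k+1) = (N+k) + 1 by ring, D.uu_succ, ih, D.cc_split, D.UUt_succ]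
    ring

lemma CCt_congr {γ γ' : D.Sigma} {N : ℕ} (h : ∀ i, N ≤ i → γ' i = γ i) (k : ℕ) :
    D.CCt γ' N k = D.CCt γ N k := by
  induction k with
  | zero => rfl
  | succ k ih =>
    rw [D.CCt_succ, D.CCt_succ, ih, h (N+k) (Nat.le_add_right N k)]

lemma UUt_congr {γ γ' : D.Sigma} {N : ℕ} (h : ∀ i, N ≤ i → γ' i = γ i) (k : ℕ) :
    D.UUt γ' N k = D.UUt γ N k := by
  induction k with
  | zero => rfl
  | succ k ih =>
    rw [D.UUt_succ, D.UUt_succ, ih, D.CCt_congr h, h (N+k) (Nat.le_add_right N k)]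

/-- The normalised limit of the tail. -/
noncomputable def WL (γ : D.Sigma) (N : ℕ) (z : ℝ) : ℝ :=
  (D.Phi γ z - D.uu γ N) / D.cc γ N

lemma Phi_split (γ : D.Sigma) (N : ℕ) (z : ℝ) :
    D.Phi γ z = D.uu γ N + D.cc γ N * D.WL γ N z := by
  have h := (D.cc_pos γ N).ne'
  unfold WL
  field_simp; ring

lemma tendsto_UC (γ : D.Sigma) (N : ℕ) (z : ℝ) :
    Tendsto (fun k => D.UUt γ N k + D.CCt γ N k * z) atTop (𝓝 (D.WL γ N z)) := by
  have hcN := D.cc_pos γ N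
  have h1 : ∀ k, D.UUt γ N k + D.CCt γ N k * z
      = (D.uu γ (N+k) + D.cc γ (N+k) * z - D.uu γ N) / D.cc γ N := by
    intro k
    rw [D.uu_split γ N k, D.cc_split γ N k]
    field_simp
    ring
  have h2 : Tendsto (fun k => D.uu γ (N+k) + D.cc γ (N+k) * z) atTop
      (𝓝 (D.uL γ + D.cL γ * z)) := by
    have ha : Tendsto (fun k : ℕ => N + k) atTop atTop := by
      simpa [Nat.add_comm] using tendsto_add_atTop_nat N
    exact ((D.tendsto_uu γ).comp ha).add (((D.tendsto_cc γ).comp ha).mul_const z)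
  have h3 : Tendsto (fun k => (D.uu γ (N+k) + D.cc γ (N+k) * z - D.uu γ N) / D.cc γ N)
      atTop (𝓝 ((D.uL γ + D.cL γ * z - D.uu γ N) / D.cc γ N)) :=
    (h2.sub_const _).div_const _
  have h4 : (D.uL γ + D.cL γ * z - D.uu γ N) / D.cc γ N = D.WL γ N z := rfl
  rw [h4] at h3
  simpa only [h1] using h3

lemma WL_congr {γ γ' : D.Sigma} {N : ℕ} (h : ∀ i, N ≤ i → γ' i = γ i) (z : ℝ) :
    D.WL γ' N z = D.WL γ N z := by
  have h1 := D.tendsto_UC γ N z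
  have h2 := D.tendsto_UC γ' N z
  have h3 : (fun k => D.UUt γ' N k + D.CCt γ' N k * z)
      = fun k => D.UUt γ N k + D.CCt γ N k * z := by
    funext k; rw [D.UUt_congr h, D.CCt_congr h]
  rw [h3] at h2
  exact tendsto_nhds_unique h2 h1

end FAData
end Aux4
section Aux5
namespace FASystem

variable (S : FASystem)

/-- Choice of a preimage parameter `z` for a point of `X`. -/
noncomputable def zCh (q : S.toFAData.X) : ℝ :=
  if S.toFAData.cL (↑q : S.toFAData.Sigma × ℝ).1 = 0 then 0
  else ((↑q : S.toFAData.Sigma × ℝ).2 - S.toFAData.uL (↑q : S.toFAData.Sigma × ℝ).1) /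
    S.toFAData.cL (↑q : S.toFAData.Sigma × ℝ).1

lemma zCh_spec (q : S.toFAData.X) :
    S.zCh q ∈ Set.Icc (0:ℝ) 1 ∧
      S.toFAData.Phi (↑q : S.toFAData.Sigma × ℝ).1 (S.zCh q) = (↑q : S.toFAData.Sigma × ℝ).2 := by
  obtain ⟨⟨γ, y⟩, hq⟩ := q
  rw [S.toFAData.mem_X_iff] at hq
  obtain ⟨h1, h2⟩ := hq
  unfold zCh
  simp only
  by_cases hc : S.toFAData.cL γ = 0
  · rw [if_pos hc]
    refine ⟨by norm_num, ?_⟩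
    unfold FAData.Phi
    rw [hc]; simp; linarith
  · rw [if_neg hc]
    have hcpos : 0 < S.toFAData.cL γ := lt_of_le_of_ne (S.toFAData.cL_nonneg γ) (Ne.symm hc)
    refine ⟨⟨div_nonneg (by linarith) hcpos.le, ?_⟩, ?_⟩
    · rw [div_le_one hcpos]; linarith
    · unfold FAData.Phi; field_simp; ring

lemma T_coe (q : S.toFAData.X) {z : ℝ} (hz : z ∈ Set.Icc (0:ℝ) 1)
    (hy : S.toFAData.Phi (↑q : S.toFAData.Sigma × ℝ).1 z = (↑q : S.toFAData.Sigma × ℝ).2) :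
    (↑(S.T q) : S.toFAData.Sigma × ℝ) =
      (S.toFAData.addOne (↑q : S.toFAData.Sigma × ℝ).1,
        S.toFAData.Phi (S.toFAData.addOne (↑q : S.toFAData.Sigma × ℝ).1) z) := by
  obtain ⟨⟨γ, y⟩, hq⟩ := q
  simp only at hy ⊢
  have h1 : Tendsto (fun n => S.toFAData.lamComp γ n z) atTop (𝓝 y) := by
    have := S.toFAData.tendsto_lamComp γ z
    rwa [hy] at this
  have h2 := S.toFAData.tendsto_lamComp (S.toFAData.addOne γ) z
  exact S.hT γ z y _ hz h1 h2 hq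

lemma T_iter (q : S.toFAData.X) {z : ℝ} (hz : z ∈ Set.Icc (0:ℝ) 1)
    (hy : S.toFAData.Phi (↑q : S.toFAData.Sigma × ℝ).1 z = (↑q : S.toFAData.Sigma × ℝ).2)
    (k : ℕ) :
    (↑(S.T^[k] q) : S.toFAData.Sigma × ℝ) =
      (S.toFAData.addOne^[k] (↑q : S.toFAData.Sigma × ℝ).1,
        S.toFAData.Phi (S.toFAData.addOne^[k] (↑q : S.toFAData.Sigma × ℝ).1) z) := by
  induction k with
  | zero =>
    simp only [Function.iterate_zero, id_eq]
    exact Prod.ext rfl hy.symm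
  | succ k ih =>
    rw [Function.iterate_succ_apply', Function.iterate_succ_apply']
    have h1 : S.toFAData.Phi (↑(S.T^[k] q) : S.toFAData.Sigma × ℝ).1 z
        = (↑(S.T^[k] q) : S.toFAData.Sigma × ℝ).2 := by rw [ih]
    have h2 := S.T_coe (S.T^[k] q) hz h1
    rw [h2, ih]

/-- The coordinates of `T`. -/
lemma T_eq (q : S.toFAData.X) :
    (↑(S.T q) : S.toFAData.Sigma × ℝ) =
      (S.toFAData.addOne (↑q : S.toFAData.Sigma × ℝ).1,
        S.toFAData.Phi (S.toFAData.addOne (↑q : S.toFAData.Sigma × ℝ).1) (S.zCh q)) :=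
  S.T_coe q (S.zCh_spec q).1 (S.zCh_spec q).2

end FASystem
end Aux5
section Aux6
namespace FASystem

variable (S : FASystem)

/-- The second coordinate of `T`. -/
noncomputable def G (q : S.toFAData.X) : ℝ := (↑(S.T q) : S.toFAData.Sigma × ℝ).2

lemma G_eq (q : S.toFAData.X) :
    S.G q = S.toFAData.Phi (S.toFAData.addOne (↑q : S.toFAData.Sigma × ℝ).1) (S.zCh q) := by
  unfold G; rw [S.T_eq]

lemma isOpen_cylX (γ : S.toFAData.Sigma) (N : ℕ) :
    IsOpen {q' : S.toFAData.X | ∀ i < N, (↑q' : S.toFAData.Sigma × ℝ).1 i = γ i} := by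
  have : {q' : S.toFAData.X | ∀ i < N, (↑q' : S.toFAData.Sigma × ℝ).1 i = γ i}
      = (fun q' : S.toFAData.X => (↑q' : S.toFAData.Sigma × ℝ).1) ⁻¹'
        {γ' : S.toFAData.Sigma | ∀ i < N, γ' i = γ i} := rfl
  rw [this]
  exact (S.toFAData.isOpen_cyl γ N).preimage (continuous_fst.comp continuous_subtype_val)

/-- In a cylinder around a point with no infinite carry, `G` is affine in the
second coordinate. -/
lemma G_affine_on_cyl {γ : S.toFAData.Sigma} {N : ℕ} (hc : S.toFAData.carryIn γ N = 0)
    (q' : S.toFAData.X) (hcyl : ∀ i < N, (↑q' : S.toFAData.Sigma × ℝ).1 i = γ i) :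
    S.G q' = S.toFAData.uu (S.toFAData.addOne γ) N
      + S.toFAData.cc (S.toFAData.addOne γ) N *
        (((↑q' : S.toFAData.Sigma × ℝ).2 - S.toFAData.uu γ N) / S.toFAData.cc γ N) := by
  have hz := S.zCh_spec q'
  have hcong : ∀ i < N, S.toFAData.addOne (↑q' : S.toFAData.Sigma × ℝ).1 i
      = S.toFAData.addOne γ i := S.toFAData.addOne_congr hcyl
  have hcar : S.toFAData.carryIn (↑q' : S.toFAData.Sigma × ℝ).1 N = 0 := by
    rw [S.toFAData.carryIn_congr hcyl]; exact hc
  have htail : ∀ i, N ≤ i → S.toFAData.addOne (↑q' : S.toFAData.Sigma × ℝ).1 i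
      = (↑q' : S.toFAData.Sigma × ℝ).1 i :=
    fun i hi => S.toFAData.addOne_eq_of_carry_zero hcar hi
  have e1 : S.G q' = S.toFAData.Phi
      (S.toFAData.addOne (↑q' : S.toFAData.Sigma × ℝ).1) (S.zCh q') := S.G_eq q'
  have e2 := S.toFAData.Phi_split (S.toFAData.addOne (↑q' : S.toFAData.Sigma × ℝ).1) N (S.zCh q')
  have e3 := S.toFAData.WL_congr htail (S.zCh q')
  have e4 : S.toFAData.WL (↑q' : S.toFAData.Sigma × ℝ).1 N (S.zCh q')
      = (((↑q' : S.toFAData.Sigma × ℝ).2 - S.toFAData.uu γ N) / S.toFAData.cc γ N) := by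
    unfold FAData.WL
    rw [hz.2, S.toFAData.uu_congr hcyl, S.toFAData.cc_congr hcyl]
  have e5 := S.toFAData.uu_congr hcong (n := N)
  have e6 := S.toFAData.cc_congr hcong (n := N)
  rw [e1, e2, e3, e4, e5, e6]

lemma continuous_G : Continuous S.G := by
  set D := S.toFAData
  rw [continuous_iff_continuousAt]
  intro q
  set γ := (↑q : D.Sigma × ℝ).1 with hγ
  rcases D.carryIn_cases γ with ⟨N, hc⟩ | htop
  · -- finite carry: G is affine on a neighbourhood
    have hmem : {q' : D.X | ∀ i < N, (↑q' : D.Sigma × ℝ).1 i = γ i} ∈ 𝓝 q :=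
      (S.isOpen_cylX γ N).mem_nhds (fun i _ => rfl)
    have hev : S.G =ᶠ[𝓝 q] fun q' => D.uu (D.addOne γ) N
        + D.cc (D.addOne γ) N *
          (((↑q' : D.Sigma × ℝ).2 - D.uu γ N) / D.cc γ N) := by
      filter_upwards [hmem] with q' hq'
      exact S.G_affine_on_cyl hc q' hq'
    have hcont : Continuous fun q' : D.X => D.uu (D.addOne γ) N
        + D.cc (D.addOne γ) N *
          (((↑q' : D.Sigma × ℝ).2 - D.uu γ N) / D.cc γ N) := by
      apply continuous_const.add
      apply continuous_const.mul
      exact ((continuous_snd.comp continuous_subtype_val).sub continuous_const).div_const _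
    exact (hcont.continuousAt).congr hev.symm
  · -- infinite carry: the fibre over `addOne γ` collapses
    have hzero : ∀ n, (D.addOne γ n).val = 0 := D.addOne_of_all_top htop
    have hfin0 : ∀ n, D.addOne γ n = D.fin0 n := fun n => Fin.ext (hzero n)
    have hinf : {n : ℕ | D.fac n (D.addOne γ n) = 1/2}.Infinite := by
      apply Set.Infinite.mono _ S.infLeft
      intro n hn
      show D.fac n (D.addOne γ n) = 1/2
      rw [hfin0 n]
      exact D.fac_eq_half_of_contr hn
    have hcL : D.cL (D.addOne γ) = 0 := D.cL_eq_zero_of_infinite hinf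
    rw [ContinuousAt, Metric.tendsto_nhds]
    intro ε hε
    have hcc : ∀ᶠ N in atTop, D.cc (D.addOne γ) N < ε := by
      have h := D.tendsto_cc (D.addOne γ)
      rw [hcL] at h
      exact h.eventually (gt_mem_nhds hε)
    obtain ⟨N, hN⟩ := hcc.exists
    have hmem : {q' : D.X | ∀ i < N, (↑q' : D.Sigma × ℝ).1 i = γ i} ∈ 𝓝 q :=
      (S.isOpen_cylX γ N).mem_nhds (fun i _ => rfl)
    filter_upwards [hmem] with q' hq'
    -- both G q' and G q lie in the interval `[uu (addOne γ) N, uu + cc]`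
    have key : ∀ q'' : D.X, (∀ i < N, (↑q'' : D.Sigma × ℝ).1 i = γ i) →
        S.G q'' ∈ Set.Icc (D.uu (D.addOne γ) N)
          (D.uu (D.addOne γ) N + D.cc (D.addOne γ) N) := by
      intro q'' hq''
      have hcong : ∀ i < N, D.addOne (↑q'' : D.Sigma × ℝ).1 i = D.addOne γ i :=
        D.addOne_congr hq''
      rw [S.G_eq]
      have := D.Phi_mem_Icc (D.addOne (↑q'' : D.Sigma × ℝ).1) (S.zCh_spec q'').1 N
      rwa [D.uu_congr hcong, D.cc_congr hcong] at this
    have h1 := key q' hq'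
    have h2 := key q (fun i _ => rfl)
    rw [Real.dist_eq]
    have := hN
    rw [abs_sub_lt_iff]
    obtain ⟨a1, b1⟩ := h1
    obtain ⟨a2, b2⟩ := h2
    constructor <;> linarith

lemma continuous_T : Continuous S.T := by
  rw [continuous_induced_rng]
  have : (Subtype.val ∘ S.T) = fun q : S.toFAData.X =>
      ((S.toFAData.addOne (↑q : S.toFAData.Sigma × ℝ).1, S.G q) : S.toFAData.Sigma × ℝ) := by
    funext q
    have h := S.T_eq q
    have hG := S.G_eq q
    rw [Function.comp_apply, h, Prod.mk.injEq]
    exact ⟨rfl, by rw [hG]⟩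
  rw [this]
  exact (S.toFAData.continuous_addOne.comp
    (continuous_fst.comp continuous_subtype_val)).prodMk S.continuous_G

end FASystem
end Aux6
section Aux7
namespace FASystem

variable (S : FASystem)

lemma isClosed_Ellis : IsClosed S.Ellis := isClosed_closure

lemma Ellis_comp_mem {f g : S.toFAData.X → S.toFAData.X}
    (hf : f ∈ S.Ellis) (hg : g ∈ S.Ellis) : f ∘ g ∈ S.Ellis := by
  have hTn : ∀ n : ℕ, Continuous (S.T^[n+1]) := fun n => S.continuous_T.iterate _
  have step1 : ∀ n : ℕ, (S.T^[n+1] ∘ g) ∈ S.Ellis := by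
    intro n
    have hcont : Continuous fun k : S.toFAData.X → S.toFAData.X => S.T^[n+1] ∘ k :=
      continuous_pi fun x => (hTn n).comp (continuous_apply x)
    have hmaps : Set.MapsTo (fun k => S.T^[n+1] ∘ k)
        (Set.range fun m : ℕ => S.T^[m+1]) (Set.range fun m : ℕ => S.T^[m+1]) := by
      rintro _ ⟨m, rfl⟩
      refine ⟨n + m + 1, ?_⟩
      show S.T^[(n+m+1)+1] = S.T^[n+1] ∘ S.T^[m+1]
      rw [show (n+m+1)+1 = (n+1)+(m+1) by omega, Function.iterate_add]
    exact map_mem_closure hcont hg hmaps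
  have hcont2 : Continuous fun k : S.toFAData.X → S.toFAData.X => k ∘ g :=
    continuous_pi fun x => continuous_apply (g x)
  have hmaps2 : Set.MapsTo (fun k => k ∘ g)
      (Set.range fun m : ℕ => S.T^[m+1]) S.Ellis := by
    rintro _ ⟨m, rfl⟩
    exact step1 m
  have := map_mem_closure hcont2 hf hmaps2
  rwa [S.isClosed_Ellis.closure_eq] at this

/-- The set of base-preserving maps collapsing the fibre over `α`. -/
def Fset (α : S.toFAData.Sigma) : Set (S.toFAData.X → S.toFAData.X) :=
  {g | (∀ q : S.toFAData.X, (↑q : S.toFAData.Sigma × ℝ).1 = α →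
      (↑(g q) : S.toFAData.Sigma × ℝ).1 = α) ∧
    ∀ q q' : S.toFAData.X, (↑q : S.toFAData.Sigma × ℝ).1 = α →
      (↑q' : S.toFAData.Sigma × ℝ).1 = α → g q = g q'}

lemma isClosed_Fset (α : S.toFAData.Sigma) : IsClosed (S.Fset α) := by
  have h1 : IsClosed {g : S.toFAData.X → S.toFAData.X |
      ∀ q : S.toFAData.X, (↑q : S.toFAData.Sigma × ℝ).1 = α →
        (↑(g q) : S.toFAData.Sigma × ℝ).1 = α} := by
    have : {g : S.toFAData.X → S.toFAData.X |
        ∀ q : S.toFAData.X, (↑q : S.toFAData.Sigma × ℝ).1 = α →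
          (↑(g q) : S.toFAData.Sigma × ℝ).1 = α}
        = ⋂ (q : S.toFAData.X) (_ : (↑q : S.toFAData.Sigma × ℝ).1 = α),
          {g : S.toFAData.X → S.toFAData.X | (↑(g q) : S.toFAData.Sigma × ℝ).1 = α} := by
      ext g; simp [Set.mem_iInter]
    rw [this]
    refine isClosed_iInter fun q => isClosed_iInter fun _ => ?_
    exact isClosed_eq ((continuous_fst.comp continuous_subtype_val).comp
      (continuous_apply q)) continuous_const
  have h2 : IsClosed {g : S.toFAData.X → S.toFAData.X |
      ∀ q q' : S.toFAData.X, (↑q : S.toFAData.Sigma × ℝ).1 = α →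
        (↑q' : S.toFAData.Sigma × ℝ).1 = α → g q = g q'} := by
    have : {g : S.toFAData.X → S.toFAData.X |
        ∀ q q' : S.toFAData.X, (↑q : S.toFAData.Sigma × ℝ).1 = α →
          (↑q' : S.toFAData.Sigma × ℝ).1 = α → g q = g q'}
        = ⋂ (q : S.toFAData.X) (q' : S.toFAData.X)
            (_ : (↑q : S.toFAData.Sigma × ℝ).1 = α)
            (_ : (↑q' : S.toFAData.Sigma × ℝ).1 = α),
          {g : S.toFAData.X → S.toFAData.X | g q = g q'} := by
      ext g; simp [Set.mem_iInter]
    rw [this]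
    refine isClosed_iInter fun q => isClosed_iInter fun q' =>
      isClosed_iInter fun _ => isClosed_iInter fun _ => ?_
    exact isClosed_eq (continuous_apply q) (continuous_apply q')
  exact h1.inter h2

lemma Fset_comp_mem (α : S.toFAData.Sigma) {f g : S.toFAData.X → S.toFAData.X}
    (hf : f ∈ S.Fset α) (hg : g ∈ S.Fset α) : f ∘ g ∈ S.Fset α := by
  constructor
  · intro q hq
    exact hf.1 (g q) (hg.1 q hq)
  · intro q q' hq hq'
    show f (g q) = f (g q')
    rw [hg.2 q q' hq hq']

/-- The key construction: a limit of iterates of `T` which preserves all bases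
and collapses the fibre over `α`. -/
lemma exists_mem_Ellis_inter_Fset (α : S.toFAData.Sigma) :
    ∃ f, f ∈ S.Ellis ∧ f ∈ S.Fset α := by
  classical
  -- step 1: for each j, find an iterate count k j
  have hstep : ∀ j : ℕ, ∃ k : ℕ, 1 ≤ k ∧
      (∀ β : S.toFAData.Sigma, ∀ r < j, (S.toFAData.addOne^[k] β) r = β r) ∧
      S.toFAData.cL (S.toFAData.addOne^[k] α) ≤ (1/2) ^ j := by
    intro j
    have hinf : ({n : ℕ | S.toFAData.lam n (S.toFAData.fin0 n) = lam0 ∨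
        S.toFAData.lam n (S.toFAData.fin0 n) = lam2} \ {n : ℕ | n < j}).Infinite :=
      S.infLeft.diff (Set.finite_lt_nat j)
    obtain ⟨s, hs, hcard⟩ := hinf.exists_subset_card_eq j
    set R := max j ((s.sup id) + 1) with hR
    have hsR : ∀ r ∈ s, r < R := by
      intro r hr
      have : r ≤ s.sup id := Finset.le_sup (f := id) hr
      omega
    have hsj : ∀ r ∈ s, j ≤ r := by
      intro r hr
      have := hs hr
      simp only [Set.mem_diff, Set.mem_setOf_eq] at this
      omega
    set target : S.toFAData.Sigma := fun r => if r ∈ s then S.toFAData.fin0 r else α r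
      with htarget
    have hagree : ∀ r < j, target r = α r := by
      intro r hr
      rw [htarget]
      simp only
      rw [if_neg (fun hmem => by have := hsj r hmem; omega)]
    obtain ⟨k, hk1, hk2, hk3⟩ :=
      S.toFAData.exists_iterate_digits α target R j (le_max_left _ _) hagree
    refine ⟨k, hk1, fun β r hr => hk3 β r hr, ?_⟩
    have hcc : S.toFAData.cc (S.toFAData.addOne^[k] α) R ≤ (1/2) ^ j := by
      rw [← hcard]
      apply S.toFAData.cc_le_pow_of_subset
      intro r hr
      refine ⟨hsR r hr, ?_⟩
      have hdig : (S.toFAData.addOne^[k] α) r = target r := hk2 r (hsR r hr)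
      have htr : target r = S.toFAData.fin0 r := by
        rw [htarget]; simp only; rw [if_pos hr]
      rw [hdig, htr]
      apply S.toFAData.fac_eq_half_of_contr
      have := hs hr
      simp only [Set.mem_diff, Set.mem_setOf_eq] at this
      exact this.1
    exact le_trans (S.toFAData.cL_le_cc _ R) hcc
  choose k hk1 hk2 hk3 using hstep
  -- step 2: take an ultrafilter limit
  obtain ⟨U, hU⟩ := Filter.exists_ultrafilter_le (atTop : Filter ℕ)
  set seq : ℕ → (S.toFAData.X → S.toFAData.X) := fun j => S.T^[k j] with hseq
  obtain ⟨f₀, -, hconv⟩ := isCompact_univ.ultrafilter_le_nhds (U.map seq)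
    (by simp [Filter.le_principal_iff])
  have hten : Tendsto seq (↑U) (𝓝 f₀) := hconv
  have hEllis : f₀ ∈ S.Ellis := by
    apply mem_closure_of_tendsto hten
    apply Filter.Eventually.of_forall
    intro j
    refine ⟨k j - 1, ?_⟩
    show S.T^[(k j - 1) + 1] = S.T^[k j]
    rw [Nat.sub_add_cancel (hk1 j)]
  -- pointwise convergence
  have hptwise : ∀ q : S.toFAData.X, Tendsto (fun j => seq j q) (↑U) (𝓝 (f₀ q)) := by
    intro q
    exact ((continuous_apply q).continuousAt (x := f₀)).tendsto.comp hten
  -- coordinates of the iterates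
  have hcoord : ∀ (q : S.toFAData.X) (j : ℕ),
      (↑(seq j q) : S.toFAData.Sigma × ℝ)
        = (S.toFAData.addOne^[k j] (↑q : S.toFAData.Sigma × ℝ).1,
          S.toFAData.Phi (S.toFAData.addOne^[k j] (↑q : S.toFAData.Sigma × ℝ).1) (S.zCh q)) :=
    fun q j => S.T_iter q (S.zCh_spec q).1 (S.zCh_spec q).2 (k j)
  -- base preservation
  have hbase : ∀ q : S.toFAData.X,
      (↑(f₀ q) : S.toFAData.Sigma × ℝ).1 = (↑q : S.toFAData.Sigma × ℝ).1 := by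
    intro q
    funext i
    have h1 : Tendsto (fun j => (↑(seq j q) : S.toFAData.Sigma × ℝ).1 i) (↑U)
        (𝓝 ((↑(f₀ q) : S.toFAData.Sigma × ℝ).1 i)) := by
      have hc : Continuous fun x : S.toFAData.X => (↑x : S.toFAData.Sigma × ℝ).1 i :=
        (continuous_apply i).comp (continuous_fst.comp continuous_subtype_val)
      exact (hc.continuousAt.tendsto).comp (hptwise q)
    have h2 : ∀ᶠ j in (↑U : Filter ℕ),
        (↑(seq j q) : S.toFAData.Sigma × ℝ).1 i = (↑q : S.toFAData.Sigma × ℝ).1 i := by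
      apply Filter.Eventually.filter_mono hU
      filter_upwards [Filter.eventually_gt_atTop i] with j hj
      rw [hcoord q j]
      exact hk2 j _ i hj
    have h3 : Tendsto (fun _ : ℕ => (↑q : S.toFAData.Sigma × ℝ).1 i) (↑U)
        (𝓝 ((↑q : S.toFAData.Sigma × ℝ).1 i)) := tendsto_const_nhds
    exact tendsto_nhds_unique (h1.congr' h2) h3
  -- collapse of the fibre over α
  have hcollapse : ∀ q q' : S.toFAData.X, (↑q : S.toFAData.Sigma × ℝ).1 = α →
      (↑q' : S.toFAData.Sigma × ℝ).1 = α → f₀ q = f₀ q' := by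
    intro q q' hq hq'
    have hz := S.zCh_spec q
    have hz' := S.zCh_spec q'
    -- second coordinates
    have hs1 : Tendsto (fun j => (↑(seq j q) : S.toFAData.Sigma × ℝ).2) (↑U)
        (𝓝 ((↑(f₀ q) : S.toFAData.Sigma × ℝ).2)) :=
      (((continuous_snd.comp continuous_subtype_val)).continuousAt.tendsto).comp (hptwise q)
    have hs2 : Tendsto (fun j => (↑(seq j q') : S.toFAData.Sigma × ℝ).2) (↑U)
        (𝓝 ((↑(f₀ q') : S.toFAData.Sigma × ℝ).2)) :=
      (((continuous_snd.comp continuous_subtype_val)).continuousAt.tendsto).comp (hptwise q')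
    have hdiff : Tendsto (fun j => (↑(seq j q) : S.toFAData.Sigma × ℝ).2
        - (↑(seq j q') : S.toFAData.Sigma × ℝ).2) (↑U)
        (𝓝 ((↑(f₀ q) : S.toFAData.Sigma × ℝ).2 - (↑(f₀ q') : S.toFAData.Sigma × ℝ).2)) :=
      hs1.sub hs2
    have hbound : ∀ j : ℕ, ‖(↑(seq j q) : S.toFAData.Sigma × ℝ).2
        - (↑(seq j q') : S.toFAData.Sigma × ℝ).2‖ ≤ (1/2) ^ j := by
      intro j
      rw [hcoord q j, hcoord q' j]
      simp only [hq, hq']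
      unfold FAData.Phi
      have hcL := hk3 j
      have hcL0 := S.toFAData.cL_nonneg (S.toFAData.addOne^[k j] α)
      obtain ⟨⟨hz0, hz1⟩, -⟩ := hz
      obtain ⟨⟨hz0', hz1'⟩, -⟩ := hz'
      rw [Real.norm_eq_abs]
      have : S.toFAData.uL (S.toFAData.addOne^[k j] α)
          + S.toFAData.cL (S.toFAData.addOne^[k j] α) * S.zCh q
          - (S.toFAData.uL (S.toFAData.addOne^[k j] α)
          + S.toFAData.cL (S.toFAData.addOne^[k j] α) * S.zCh q')
          = S.toFAData.cL (S.toFAData.addOne^[k j] α) * (S.zCh q - S.zCh q') := by ring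
      rw [this, abs_mul, abs_of_nonneg hcL0]
      have habs : |S.zCh q - S.zCh q'| ≤ 1 := by
        rw [abs_le]; constructor <;> linarith
      nlinarith
    have hzero : Tendsto (fun j => (↑(seq j q) : S.toFAData.Sigma × ℝ).2
        - (↑(seq j q') : S.toFAData.Sigma × ℝ).2) (↑U) (𝓝 0) := by
      apply squeeze_zero_norm hbound
      exact (tendsto_pow_atTop_nhds_zero_of_lt_one (by norm_num) (by norm_num)).mono_left hU
    have hsndeq : (↑(f₀ q) : S.toFAData.Sigma × ℝ).2
        = (↑(f₀ q') : S.toFAData.Sigma × ℝ).2 := by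
      have := tendsto_nhds_unique hdiff hzero
      linarith
    have hfsteq : (↑(f₀ q) : S.toFAData.Sigma × ℝ).1
        = (↑(f₀ q') : S.toFAData.Sigma × ℝ).1 := by
      rw [hbase q, hbase q', hq, hq']
    exact Subtype.ext (Prod.ext hfsteq hsndeq)
  exact ⟨f₀, hEllis, fun q hq => by rw [hbase q, hq], hcollapse⟩

/-- Ellis–Numakura: an idempotent in `Ellis ∩ Fset α`. -/
lemma exists_idempotent_collapsing (α : S.toFAData.Sigma) :
    ∃ f, f ∈ S.Ellis ∧ f ∘ f = f ∧ f ∈ S.Fset α := by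
  classical
  set K : Set (S.toFAData.X → S.toFAData.X) := S.Ellis ∩ S.Fset α with hK
  obtain ⟨f₀, hf₀E, hf₀F⟩ := S.exists_mem_Ellis_inter_Fset α
  have hKne : K.Nonempty := ⟨f₀, hf₀E, hf₀F⟩
  have hKclosed : IsClosed K := S.isClosed_Ellis.inter (S.isClosed_Fset α)
  have hKcomp : ∀ a b : K, (a : S.toFAData.X → S.toFAData.X) ∘ (b : _) ∈ K :=
    fun a b => ⟨S.Ellis_comp_mem a.2.1 b.2.1, S.Fset_comp_mem α a.2.2 b.2.2⟩
  haveI : Nonempty K := hKne.to_subtype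
  letI : Semigroup K :=
    { mul := fun a b => ⟨(a : S.toFAData.X → S.toFAData.X) ∘ (b : _), hKcomp a b⟩
      mul_assoc := fun a b c => Subtype.ext rfl }
  haveI : CompactSpace K := isCompact_iff_compactSpace.mp hKclosed.isCompact
  have hmul : ∀ r : K, Continuous fun a : K => a * r := by
    intro r
    apply Continuous.subtype_mk
    have : Continuous fun g : S.toFAData.X → S.toFAData.X =>
        g ∘ (r : S.toFAData.X → S.toFAData.X) :=
      continuous_pi fun x => continuous_apply ((r : S.toFAData.X → S.toFAData.X) x)
    exact this.comp continuous_subtype_val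
  obtain ⟨m, hm⟩ := exists_idempotent_of_compact_t2_of_continuous_mul_left hmul
  refine ⟨(m : S.toFAData.X → S.toFAData.X), m.2.1, ?_, m.2.2⟩
  have := congrArg Subtype.val hm
  exact this

end FASystem
end Aux7


/-- For every `α ∈ Σ` there is an idempotent `f ∈ J(X)` collapsing
the fibre `L_α` to a single point `(α,z) ∈ L_α`. -/
theorem floyd_auslander_exists_collapsing_idempotent (S : FASystem)
    (α : S.toFAData.Sigma) :
    ∃ f ∈ S.J, ∃ z : ℝ, (α, z) ∈ S.toFAData.X ∧
      ∀ q : S.toFAData.X, (q : S.toFAData.Sigma × ℝ).1 = α →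
        (f q : S.toFAData.Sigma × ℝ) = (α, z) := by
  obtain ⟨f, hfE, hff, hfF⟩ := S.exists_idempotent_collapsing α
  have h0 : (α, S.toFAData.Phi α 0) ∈ S.toFAData.X :=
    S.toFAData.Phi_mem_X α (by norm_num)
  set q₀ : S.toFAData.X := ⟨(α, S.toFAData.Phi α 0), h0⟩ with hq₀
  have hq₀fst : (↑q₀ : S.toFAData.Sigma × ℝ).1 = α := rfl
  set z : ℝ := (↑(f q₀) : S.toFAData.Sigma × ℝ).2 with hz
  have hfst : (↑(f q₀) : S.toFAData.Sigma × ℝ).1 = α := hfF.1 q₀ hq₀fst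
  have heq : ((α, z) : S.toFAData.Sigma × ℝ) = ↑(f q₀) := Prod.ext hfst.symm rfl
  refine ⟨f, ⟨hfE, hff⟩, z, ?_, ?_⟩
  · rw [heq]; exact (f q₀).2
  · intro q hq
    have : f q = f q₀ := hfF.2 q q₀ hq hq₀fst
    rw [this, ← heq]
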